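/- Let 0 < ε ≤ 1/8, set ε̂ = ε²/4, and let Δ be a real number with Δ ≥ 144/ε̂⁴. Let V be a finite set, let D ⊆ V, and let R be the random subset of V consisting of all of D together with each element of V ∖ D included independently with probability 1 − ε. Let Z ⊆ V ∖ D with |Z| ≥ ε·Δ, and for each z ∈ Z let U_z ⊆ V ∖ {z} be a set with |U_z| ≥ (1 − 3ε)·Δ. Then with probability at least 1 − ε there exists z ∈ Z such that z ∉ R and |U_z ∩ R| ≥ (1 − 5ε)·Δ. -/

import Mathlib

open Finset

lemma key_sum {α : Type*} [DecidableEq α] (Ω A B : Finset α) (p q : ℝ) (hpq : p + q = 1)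
    (hA : A ⊆ Ω) (hB : B ⊆ Ω) (hAB : Disjoint A B) :
    ∑ S ∈ Ω.powerset, (if A ⊆ S ∧ Disjoint B S then p ^ S.card * q ^ (Ω.card - S.card) else 0)
      = p ^ A.card * q ^ B.card := by
  classical
  have h := Finset.prod_add (fun i => if i ∈ B then 0 else p) (fun i => if i ∈ A then 0 else q) Ω
  have hterm : ∀ S ∈ Ω.powerset,
      (∏ i ∈ S, (if i ∈ B then (0:ℝ) else p)) * ∏ i ∈ Ω \ S, (if i ∈ A then (0:ℝ) else q)
      = (if A ⊆ S ∧ Disjoint B S then p ^ S.card * q ^ (Ω.card - S.card) else 0) := by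
    intro S hS
    rw [Finset.mem_powerset] at hS
    by_cases hcond : A ⊆ S ∧ Disjoint B S
    · rw [if_pos hcond]
      have e1 : (∏ i ∈ S, (if i ∈ B then (0:ℝ) else p)) = p ^ S.card :=
        Finset.prod_eq_pow_card fun i hi => by
          have : i ∉ B := Finset.disjoint_right.mp hcond.2 hi
          simp [this]
      have e2 : (∏ i ∈ Ω \ S, (if i ∈ A then (0:ℝ) else q)) = q ^ (Ω.card - S.card) := by
        rw [← Finset.card_sdiff_of_subset hS]
        exact Finset.prod_eq_pow_card fun i hi => by
          have : i ∉ A := fun hiA => (Finset.mem_sdiff.mp hi).2 (hcond.1 hiA)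
          simp [this]
      rw [e1, e2]
    · rw [if_neg hcond]
      rw [not_and_or] at hcond
      rcases hcond with hc | hc
      · obtain ⟨i, hiA, hiS⟩ := Finset.not_subset.mp hc
        have hi : i ∈ Ω \ S := Finset.mem_sdiff.mpr ⟨hA hiA, hiS⟩
        rw [Finset.prod_eq_zero hi (by simp [hiA]), mul_zero]
      · rw [Finset.not_disjoint_iff] at hc
        obtain ⟨i, hiB, hiS⟩ := hc
        rw [Finset.prod_eq_zero hiS (by simp [hiB]), zero_mul]
  rw [Finset.sum_congr rfl hterm] at h
  rw [← h]
  have hBsub : B ⊆ Ω \ A := fun i hi =>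
    Finset.mem_sdiff.mpr ⟨hB hi, fun hA' => Finset.disjoint_left.mp hAB hA' hi⟩
  rw [← Finset.prod_sdiff hA, ← Finset.prod_sdiff hBsub]
  have e1 : (∏ i ∈ A, ((if i ∈ B then (0:ℝ) else p) + if i ∈ A then 0 else q)) = p ^ A.card := by
    refine Finset.prod_eq_pow_card fun i hi => ?_
    have hiB : i ∉ B := Finset.disjoint_left.mp hAB hi
    simp [hi, hiB]
  have e2 : (∏ i ∈ B, ((if i ∈ B then (0:ℝ) else p) + if i ∈ A then 0 else q)) = q ^ B.card := by
    refine Finset.prod_eq_pow_card fun i hi => ?_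
    have hiA : i ∉ A := Finset.disjoint_right.mp hAB hi
    simp [hi, hiA]
  have e3 : (∏ i ∈ (Ω \ A) \ B, ((if i ∈ B then (0:ℝ) else p) + if i ∈ A then 0 else q)) = 1 := by
    apply Finset.prod_eq_one
    intro i hi
    obtain ⟨hi1, hiB⟩ := Finset.mem_sdiff.mp hi
    have hiA : i ∉ A := (Finset.mem_sdiff.mp hi1).2
    simp [hiA, hiB, hpq]
  rw [e1, e2, e3, one_mul]
  ring

lemma cheb_tail {α : Type*} [DecidableEq α] (Ω W : Finset α) (hW : W ⊆ Ω) (p q : ℝ)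
    (hpq : p + q = 1) (hp : 0 ≤ p) (hq : 0 ≤ q) (c : ℝ) (hc : q * W.card < c) :
    ∑ S ∈ Ω.powerset, (if c ≤ ((W \ S).card : ℝ) then p ^ S.card * q ^ (Ω.card - S.card) else 0)
      ≤ q * W.card / (c - q * W.card) ^ 2 := by
  classical
  set μ : Finset α → ℝ := fun S => p ^ S.card * q ^ (Ω.card - S.card) with hμ
  have hμ0 : ∀ S, 0 ≤ μ S := fun S => mul_nonneg (pow_nonneg hp _) (pow_nonneg hq _)
  set m : ℝ := (W.card : ℝ) with hm
  have hm0 : 0 ≤ m := by positivity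
  -- indicator representation of |W \ S|
  have hX : ∀ S : Finset α, ((W \ S).card : ℝ) = ∑ w ∈ W, (if w ∉ S then (1:ℝ) else 0) := by
    intro S
    rw [Finset.sdiff_eq_filter, Finset.card_filter]
    push_cast
    rfl
  -- single-element probabilities
  have single : ∀ w ∈ W, ∑ S ∈ Ω.powerset, (if w ∉ S then μ S else 0) = q := by
    intro w hw
    have h := key_sum Ω ∅ {w} p q hpq (Finset.empty_subset _)
      (Finset.singleton_subset_iff.mpr (hW hw)) (Finset.disjoint_empty_left _)
    simp only [Finset.empty_subset, true_and, Finset.disjoint_singleton_left,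
      Finset.card_empty, pow_zero, Finset.card_singleton, pow_one, one_mul] at h
    exact h
  -- pair probabilities
  have pair : ∀ w ∈ W, ∀ w' ∈ W, ∑ S ∈ Ω.powerset, (if w ∉ S ∧ w' ∉ S then μ S else 0)
      = if w = w' then q else q ^ 2 := by
    intro w hw w' hw'
    by_cases hww : w = w'
    · subst hww
      rw [if_pos rfl, ← single w hw]
      exact Finset.sum_congr rfl fun S _ => if_congr and_self_iff rfl rfl
    · have h := key_sum Ω ∅ (insert w {w'}) p q hpq (Finset.empty_subset _)
        (by intro x hx; simp only [Finset.mem_insert, Finset.mem_singleton] at hx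
            rcases hx with rfl | rfl; exacts [hW hw, hW hw'])
        (Finset.disjoint_empty_left _)
      rw [if_neg hww]
      rw [Finset.card_insert_of_notMem (by simpa using hww), Finset.card_singleton,
        Finset.card_empty, pow_zero, one_mul] at h
      rw [← h]
      refine Finset.sum_congr rfl fun S _ => ?_
      refine if_congr ?_ rfl rfl
      simp [Finset.disjoint_insert_left, Finset.disjoint_singleton_left]
  -- zeroth moment
  have E0 : ∑ S ∈ Ω.powerset, μ S = 1 := by
    have h := key_sum Ω ∅ ∅ p q hpq (Finset.empty_subset _) (Finset.empty_subset _)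
      (Finset.disjoint_empty_left _)
    simpa using h
  -- first moment
  have E1 : ∑ S ∈ Ω.powerset, μ S * ((W \ S).card : ℝ) = q * m := by
    calc ∑ S ∈ Ω.powerset, μ S * ((W \ S).card : ℝ)
        = ∑ S ∈ Ω.powerset, ∑ w ∈ W, (if w ∉ S then μ S else 0) := by
          refine Finset.sum_congr rfl fun S _ => ?_
          rw [hX, Finset.mul_sum]
          exact Finset.sum_congr rfl fun w _ => by split <;> simp
      _ = ∑ w ∈ W, ∑ S ∈ Ω.powerset, (if w ∉ S then μ S else 0) := Finset.sum_comm
      _ = ∑ w ∈ W, q := Finset.sum_congr rfl single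
      _ = q * m := by rw [Finset.sum_const, nsmul_eq_mul, mul_comm]
  -- second moment
  have E2 : ∑ S ∈ Ω.powerset, μ S * ((W \ S).card : ℝ) ^ 2 = m * (m * q^2 + q - q^2) := by
    calc ∑ S ∈ Ω.powerset, μ S * ((W \ S).card : ℝ) ^ 2
        = ∑ S ∈ Ω.powerset, ∑ w ∈ W, ∑ w' ∈ W, (if w ∉ S ∧ w' ∉ S then μ S else 0) := by
          refine Finset.sum_congr rfl fun S _ => ?_
          rw [hX, sq, Finset.sum_mul_sum, Finset.mul_sum]
          refine Finset.sum_congr rfl fun w _ => ?_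
          rw [Finset.mul_sum]
          refine Finset.sum_congr rfl fun w' _ => ?_
          by_cases h1 : w ∉ S <;> by_cases h2 : w' ∉ S <;> simp [h1, h2]
      _ = ∑ w ∈ W, ∑ w' ∈ W, ∑ S ∈ Ω.powerset, (if w ∉ S ∧ w' ∉ S then μ S else 0) := by
          rw [Finset.sum_comm]
          exact Finset.sum_congr rfl fun w _ => Finset.sum_comm
      _ = ∑ w ∈ W, ∑ w' ∈ W, (if w = w' then q else q ^ 2) := by
          refine Finset.sum_congr rfl fun w hw => Finset.sum_congr rfl fun w' hw' => pair w hw w' hw'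
      _ = ∑ w ∈ W, (m * q^2 + q - q^2) := by
          refine Finset.sum_congr rfl fun w hw => ?_
          have : ∀ w' ∈ W, (if w = w' then q else q ^ 2) = q^2 + (if w = w' then q - q^2 else 0) := by
            intro w' _; split <;> ring
          rw [Finset.sum_congr rfl this, Finset.sum_add_distrib, Finset.sum_const,
            Finset.sum_ite_eq W w (fun _ => q - q^2), if_pos hw, nsmul_eq_mul]
          ring
      _ = m * (m * q^2 + q - q^2) := by rw [Finset.sum_const, nsmul_eq_mul]
  -- variance
  have Var : ∑ S ∈ Ω.powerset, μ S * (((W \ S).card : ℝ) - q * m) ^ 2 = m * q * p := by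
    have expand : ∀ S ∈ Ω.powerset, μ S * (((W \ S).card : ℝ) - q * m) ^ 2
        = μ S * ((W \ S).card : ℝ)^2 - (2*q*m) * (μ S * ((W \ S).card : ℝ)) + (q*m)^2 * μ S := by
      intro S _; ring
    rw [Finset.sum_congr rfl expand, Finset.sum_add_distrib, Finset.sum_sub_distrib,
      ← Finset.mul_sum, ← Finset.mul_sum, E0, E1, E2]
    have : q * p = q - q^2 := by nlinarith [hpq]
    nlinarith [this]
  -- Chebyshev
  set lam : ℝ := c - q * m with hlam
  have hlam0 : 0 < lam := by rw [hlam]; linarith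
  have pointwise : ∀ S ∈ Ω.powerset,
      (if c ≤ ((W \ S).card : ℝ) then μ S else 0)
        ≤ μ S * (((W \ S).card : ℝ) - q * m) ^ 2 / lam ^ 2 := by
    intro S _
    split
    · rename_i hcle
      have hdev : lam ≤ ((W \ S).card : ℝ) - q * m := by rw [hlam]; linarith
      have h1 : lam ^ 2 ≤ (((W \ S).card : ℝ) - q * m) ^ 2 := by nlinarith
      rw [le_div_iff₀ (by positivity)]
      calc μ S * lam ^ 2 ≤ μ S * (((W \ S).card : ℝ) - q * m) ^ 2 :=
            mul_le_mul_of_nonneg_left h1 (hμ0 S)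
        _ = _ := rfl
    · positivity
  calc ∑ S ∈ Ω.powerset, (if c ≤ ((W \ S).card : ℝ) then μ S else 0)
      ≤ ∑ S ∈ Ω.powerset, μ S * (((W \ S).card : ℝ) - q * m) ^ 2 / lam ^ 2 :=
        Finset.sum_le_sum pointwise
    _ = (∑ S ∈ Ω.powerset, μ S * (((W \ S).card : ℝ) - q * m) ^ 2) / lam ^ 2 := by
        rw [Finset.sum_div]
    _ = m * q * p / lam ^ 2 := by rw [Var]
    _ ≤ q * m / lam ^ 2 := by
        apply div_le_div_of_nonneg_right ?_ (by positivity)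
        have hp1 : p ≤ 1 := by linarith
        have h2 := mul_le_mul_of_nonneg_left hp1 (mul_nonneg hm0 hq)
        nlinarith [h2]
    _ = q * m / (c - q * m) ^ 2 := by rw [hlam]


attribute [local instance] Classical.propDecidable

set_option maxHeartbeats 2000000 in
/-- Let `0 < ε ≤ 1/8`, `ε̂ = ε²/4`, and let `Δ ≥ 144/ε̂⁴` be real.
Let `R` be the random subset of the finite set `V` consisting of all of `D ⊆ V` together
with each element of `V ∖ D` included independently with probability `1 − ε`.  If
`Z ⊆ V ∖ D` has `|Z| ≥ ε·Δ` and each `z ∈ Z` comes with a set `U_z ⊆ V ∖ {z}` of size at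
least `(1 − 3ε)·Δ`, then with probability at least `1 − ε` there is `z ∈ Z` with `z ∉ R`
and `|U_z ∩ R| ≥ (1 − 5ε)·Δ`. -/
theorem exists_unrevealed_high_degree {α : Type*} [DecidableEq α]
    (ε Δ : ℝ) (hε0 : 0 < ε) (hε1 : ε ≤ 1 / 8) (hΔ : 144 / (ε ^ 2 / 4) ^ 4 ≤ Δ)
    (V D : Finset α) (hD : D ⊆ V)
    (Z : Finset α) (hZ : Z ⊆ V \ D) (hZcard : ε * Δ ≤ (Z.card : ℝ))
    (U : α → Finset α) (hU : ∀ z ∈ Z, U z ⊆ V.erase z)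
    (hUcard : ∀ z ∈ Z, (1 - 3 * ε) * Δ ≤ ((U z).card : ℝ)) :
    1 - ε ≤
      ∑ S ∈ (V \ D).powerset,
        (if ∃ z ∈ Z, z ∉ D ∪ S ∧ (1 - 5 * ε) * Δ ≤ (((U z) ∩ (D ∪ S)).card : ℝ)
         then (1 - ε) ^ S.card * ε ^ ((V \ D).card - S.card) else 0) := by
  classical
  set Ω : Finset α := V \ D with hΩdef
  set μ : Finset α → ℝ := fun S => (1 - ε) ^ S.card * ε ^ (Ω.card - S.card) with hμdef
  have hμ0 : ∀ S, 0 ≤ μ S := fun S =>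
    mul_nonneg (pow_nonneg (by linarith) _) (pow_nonneg hε0.le _)
  have hpq : (1 - ε) + ε = 1 := by ring
  set E : Finset α → Prop :=
    fun S => ∃ z ∈ Z, z ∉ D ∪ S ∧ (1 - 5 * ε) * Δ ≤ (((U z) ∩ (D ∪ S)).card : ℝ) with hEdef
  -- numeric groundwork
  have hε1' : ε ≤ 1 := by linarith
  have hΔε8 : (36864 : ℝ) ≤ Δ * ε ^ 8 := by
    have hpow : ((ε ^ 2 / 4) ^ 4 : ℝ) = ε ^ 8 / 256 := by ring
    rw [hpow] at hΔ
    have h1 := (div_le_iff₀ (by positivity : (0:ℝ) < ε ^ 8 / 256)).mp hΔ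
    nlinarith [h1]
  have hΔ0 : 0 < Δ := by nlinarith [pow_pos hε0 8]
  have hε8le : ∀ n : ℕ, n ≤ 8 → ε ^ 8 ≤ ε ^ n := fun n hn =>
    pow_le_pow_of_le_one hε0.le hε1' hn
  have key1 : (36864 : ℝ) ≤ Δ * ε := by
    have := mul_le_mul_of_nonneg_left (hε8le 1 (by norm_num)) hΔ0.le
    simpa using le_trans hΔε8 (by simpa using this)
  have key3 : (36864 : ℝ) ≤ Δ * ε ^ 3 :=
    le_trans hΔε8 (mul_le_mul_of_nonneg_left (hε8le 3 (by norm_num)) hΔ0.le)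
  have key4 : (36864 : ℝ) ≤ Δ * ε ^ 4 :=
    le_trans hΔε8 (mul_le_mul_of_nonneg_left (hε8le 4 (by norm_num)) hΔ0.le)
  -- choose k and Z'
  set k : ℕ := ⌈2 / ε ^ 2⌉₊ with hkdef
  have hk1 : 2 / ε ^ 2 ≤ (k : ℝ) := Nat.le_ceil _
  have hk1' : 2 ≤ (k : ℝ) * ε ^ 2 := by
    rw [div_le_iff₀ (by positivity)] at hk1; exact hk1
  have hk2 : (k : ℝ) < 2 / ε ^ 2 + 1 := Nat.ceil_lt_add_one (by positivity)
  have hk3 : (k : ℝ) ≤ 3 / ε ^ 2 := by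
    have h1 : (1:ℝ) ≤ 1 / ε ^ 2 := by
      rw [le_div_iff₀ (by positivity)]; nlinarith
    have : 2 / ε ^ 2 + 1 ≤ 3 / ε ^ 2 := by
      have : (2:ℝ) / ε ^ 2 + 1 / ε ^ 2 = 3 / ε ^ 2 := by ring
      linarith
    linarith
  have hk3' : (k : ℝ) * ε ^ 2 ≤ 3 := by
    have := hk3
    rw [le_div_iff₀ (by positivity)] at this; exact this
  have hkZ : k ≤ Z.card := by
    have h1 : (k : ℝ) ≤ (Z.card : ℝ) := by
      have h2 : 3 / ε ^ 2 ≤ ε * Δ := by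
        rw [div_le_iff₀ (by positivity)]
        nlinarith [key3]
      linarith
    exact_mod_cast h1
  obtain ⟨Z', hZ'Z, hZ'card⟩ := Finset.exists_subset_card_eq hkZ
  have hZ'Ω : Z' ⊆ Ω := hZ'Z.trans hZ
  -- choose the witness sets W z
  have hWex : ∀ z : α, ∃ Wz, Wz ⊆ (U z) \ D ∧ Wz.card = min ((U z \ D).card) ⌈Δ⌉₊ :=
    fun z => Finset.exists_subset_card_eq (min_le_left _ _)
  choose W hWsub hWcard using hWex
  have hWΩ : ∀ z ∈ Z', W z ⊆ Ω := by
    intro z hz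
    refine (hWsub z).trans ?_
    intro x hx
    rw [Finset.mem_sdiff] at hx ⊢
    exact ⟨(Finset.erase_subset _ _) (hU z (hZ'Z hz) hx.1), hx.2⟩
  set c : α → ℝ := fun z => ε * ((W z).card : ℝ) + (ε * Δ - 1) with hcdef
  have hεΔ1 : (2:ℝ) ≤ ε * Δ := by nlinarith [key1]
  have hcgt : ∀ z, ε * ((W z).card : ℝ) < c z := by
    intro z; rw [hcdef]; simp only; nlinarith
  -- bound on (W z).card
  have hWcard_le : ∀ z, ((W z).card : ℝ) ≤ Δ + 1 := by
    intro z
    rw [hWcard]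
    calc ((min ((U z \ D).card) ⌈Δ⌉₊ : ℕ) : ℝ) ≤ (⌈Δ⌉₊ : ℝ) := by
          exact_mod_cast Nat.cast_le.mpr (min_le_right _ _)
      _ ≤ Δ + 1 := le_of_lt (Nat.ceil_lt_add_one hΔ0.le)
  -- total mass is 1
  have E0 : ∑ S ∈ Ω.powerset, μ S = 1 := by
    have h := key_sum Ω ∅ ∅ (1-ε) ε hpq (Finset.empty_subset _) (Finset.empty_subset _)
      (Finset.disjoint_empty_left _)
    simpa using h
  -- reduce to bounding the bad event
  have hgoal : ∑ S ∈ Ω.powerset, (if E S then μ S else 0)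
      = 1 - ∑ S ∈ Ω.powerset, (if ¬ E S then μ S else 0) := by
    have hterm : ∀ S ∈ Ω.powerset, (if E S then μ S else 0) = μ S - (if ¬ E S then μ S else 0) :=
      fun S _ => by by_cases hE : E S <;> simp [hE]
    rw [Finset.sum_congr rfl hterm, Finset.sum_sub_distrib, E0]
  rw [hgoal]
  have hbad : ∑ S ∈ Ω.powerset, (if ¬ E S then μ S else 0) ≤ ε := by
    -- pointwise bound
    have hpt : ∀ S ∈ Ω.powerset, (if ¬ E S then μ S else 0)
        ≤ (if Z' ⊆ S ∧ Disjoint (∅ : Finset α) S then μ S else 0)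
          + ∑ z ∈ Z', (if c z ≤ ((W z \ S).card : ℝ) then μ S else 0) := by
      intro S hS
      rw [Finset.mem_powerset] at hS
      have hsum0 : 0 ≤ ∑ z ∈ Z', (if c z ≤ ((W z \ S).card : ℝ) then μ S else 0) :=
        Finset.sum_nonneg fun z _ => by split; exacts [hμ0 S, le_rfl]
      by_cases hE : E S
      · rw [if_neg (not_not_intro hE)]
        have : (0:ℝ) ≤ (if Z' ⊆ S ∧ Disjoint (∅ : Finset α) S then μ S else 0) := by
          split; exacts [hμ0 S, le_rfl]
        linarith
      · rw [if_pos hE]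
        by_cases hZS : Z' ⊆ S
        · rw [if_pos ⟨hZS, Finset.disjoint_empty_left _⟩]
          linarith
        · obtain ⟨z, hzZ', hzS⟩ := Finset.not_subset.mp hZS
          have hkey : c z ≤ ((W z \ S).card : ℝ) := by
            by_contra hlt
            push_neg at hlt
            apply hE
            refine ⟨z, hZ'Z hzZ', ?_, ?_⟩
            · rw [Finset.mem_union]
              push_neg
              exact ⟨(Finset.mem_sdiff.mp (hZ (hZ'Z hzZ'))).2, hzS⟩
            · -- counting
              have hsub : (U z ∩ D) ∪ (W z ∩ S) ⊆ U z ∩ (D ∪ S) := by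
                intro x hx
                rw [Finset.mem_union] at hx
                rcases hx with hx | hx
                · rw [Finset.mem_inter] at hx ⊢
                  exact ⟨hx.1, Finset.mem_union_left _ hx.2⟩
                · rw [Finset.mem_inter] at hx ⊢
                  have hxU : x ∈ U z \ D := hWsub z hx.1
                  exact ⟨(Finset.mem_sdiff.mp hxU).1, Finset.mem_union_right _ hx.2⟩
              have hdisj : Disjoint (U z ∩ D) (W z ∩ S) := by
                refine Finset.disjoint_left.mpr fun x hx1 hx2 => ?_
                have : x ∈ U z \ D := hWsub z (Finset.mem_inter.mp hx2).1
                exact (Finset.mem_sdiff.mp this).2 (Finset.mem_inter.mp hx1).2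
              have hcount : ((U z ∩ D).card : ℝ) + ((W z ∩ S).card : ℝ)
                  ≤ ((U z ∩ (D ∪ S)).card : ℝ) := by
                rw [← Nat.cast_add, ← Finset.card_union_of_disjoint hdisj]
                exact_mod_cast Finset.card_le_card hsub
              have hWS : ((W z \ S).card : ℝ) + ((W z ∩ S).card : ℝ) = ((W z).card : ℝ) := by
                exact_mod_cast congrArg (Nat.cast (R := ℝ)) (Finset.card_sdiff_add_card_inter (W z) S)
              have hUD : ((U z ∩ D).card : ℝ) + ((U z \ D).card : ℝ) = ((U z).card : ℝ) := by
                have := Finset.card_sdiff_add_card_inter (U z) D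
                push_cast [← this]
                ring
              have hUz := hUcard z (hZ'Z hzZ')
              have hceil1 : Δ ≤ (⌈Δ⌉₊ : ℝ) := Nat.le_ceil Δ
              have hceil2 : (⌈Δ⌉₊ : ℝ) ≤ Δ + 1 := le_of_lt (Nat.ceil_lt_add_one hΔ0.le)
              rw [hcdef] at hlt
              simp only at hlt
              rcases le_total ((U z \ D).card) (⌈Δ⌉₊) with hmin | hmin
              · -- W z has all of U z \ D
                have htw : ((W z).card : ℝ) = ((U z \ D).card : ℝ) := by
                  rw [hWcard, min_eq_left hmin]
                have htwle : ((W z).card : ℝ) ≤ Δ + 1 := hWcard_le z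
                have hprod : ε * ((W z).card : ℝ) ≤ ε * (Δ + 1) :=
                  mul_le_mul_of_nonneg_left htwle hε0.le
                calc (1 - 5 * ε) * Δ ≤ ((U z ∩ D).card : ℝ) + ((W z ∩ S).card : ℝ) := by
                      nlinarith [hlt, hWS, hUD, htw, hUz, hprod]
                  _ ≤ _ := hcount
              · -- W z has exactly ⌈Δ⌉₊ elements
                have htw : ((W z).card : ℝ) = (⌈Δ⌉₊ : ℝ) := by
                  rw [hWcard, min_eq_right hmin]
                have hUDnn : (0:ℝ) ≤ ((U z ∩ D).card : ℝ) := by positivity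
                have htwge : Δ ≤ ((W z).card : ℝ) := by rw [htw]; exact hceil1
                have htwle : ((W z).card : ℝ) ≤ Δ + 1 := hWcard_le z
                have hprod : ε * Δ ≤ ε * ((W z).card : ℝ) :=
                  mul_le_mul_of_nonneg_left htwge hε0.le
                have hprod2 : ε * ((W z).card : ℝ) ≤ ε * (Δ + 1) :=
                  mul_le_mul_of_nonneg_left htwle hε0.le
                calc (1 - 5 * ε) * Δ ≤ ((U z ∩ D).card : ℝ) + ((W z ∩ S).card : ℝ) := by
                      nlinarith [hlt, hWS, hUDnn, hprod, hprod2, hεΔ1]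
                  _ ≤ _ := hcount
          calc μ S ≤ ∑ z' ∈ Z', (if c z' ≤ ((W z' \ S).card : ℝ) then μ S else 0) := by
                refine Finset.single_le_sum (f := fun z' => (if c z' ≤ ((W z' \ S).card : ℝ) then μ S else 0))
                  (fun z' _ => by split; exacts [hμ0 S, le_rfl]) hzZ' |>.trans_eq' ?_
                rw [if_pos hkey]
            _ ≤ _ := by
                have : (0:ℝ) ≤ (if Z' ⊆ S ∧ Disjoint (∅ : Finset α) S then μ S else 0) := by
                  split; exacts [hμ0 S, le_rfl]
                linarith
    -- sum the pointwise bound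
    have hsum := Finset.sum_le_sum hpt
    rw [Finset.sum_add_distrib] at hsum
    have hterm1 : ∑ S ∈ Ω.powerset, (if Z' ⊆ S ∧ Disjoint (∅ : Finset α) S then μ S else 0)
        = (1 - ε) ^ k := by
      have h := key_sum Ω Z' ∅ (1-ε) ε hpq hZ'Ω (Finset.empty_subset _)
        (Finset.disjoint_empty_right _)
      rw [Finset.card_empty, pow_zero, mul_one, hZ'card] at h
      exact h
    have hterm2 : ∑ S ∈ Ω.powerset, ∑ z ∈ Z', (if c z ≤ ((W z \ S).card : ℝ) then μ S else 0)
        ≤ (k : ℝ) * (8 / (ε * Δ)) := by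
      rw [Finset.sum_comm]
      calc ∑ z ∈ Z', ∑ S ∈ Ω.powerset, (if c z ≤ ((W z \ S).card : ℝ) then μ S else 0)
          ≤ ∑ z ∈ Z', (8 / (ε * Δ)) := by
            refine Finset.sum_le_sum fun z hz => ?_
            have hch := cheb_tail Ω (W z) (hWΩ z hz) (1-ε) ε hpq (by linarith) hε0.le
              (c z) (hcgt z)
            refine hch.trans ?_
            have hcm : c z - ε * ((W z).card : ℝ) = ε * Δ - 1 := by rw [hcdef]; ring
            rw [hcm]
            rw [div_le_div_iff₀ (by nlinarith) (by nlinarith)]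
            have h1 : (0:ℝ) ≤ ((W z).card : ℝ) := by positivity
            nlinarith [hWcard_le z, key1, hεΔ1, h1]
        _ = (k : ℝ) * (8 / (ε * Δ)) := by
            rw [Finset.sum_const, hZ'card, nsmul_eq_mul]
    have hpk : (1 - ε) ^ k ≤ ε / 2 := by
      have bern : 1 + (k:ℝ) * ε ≤ (1 + ε) ^ k := one_add_mul_le_pow (by linarith) k
      have h1e : (1 - ε) ≤ 1 / (1 + ε) := by
        rw [le_div_iff₀ (by linarith)]; nlinarith
      have hpk1 : (1 - ε) ^ k ≤ (1 / (1 + ε)) ^ k := pow_le_pow_left₀ (by linarith) h1e k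
      have hpk2 : ((1:ℝ) / (1 + ε)) ^ k = 1 / (1 + ε) ^ k := by rw [div_pow, one_pow]
      have hpos : (0:ℝ) < 1 + (k:ℝ) * ε := by positivity
      have hpk3 : 1 / (1 + ε) ^ k ≤ 1 / (1 + (k:ℝ) * ε) :=
        one_div_le_one_div_of_le hpos bern
      have hkε : 2 / ε ≤ (k:ℝ) * ε := by
        rw [div_le_iff₀ hε0]
        nlinarith [hk1']
      have hpk4 : 1 / (1 + (k:ℝ) * ε) ≤ ε / 2 := by
        rw [div_le_div_iff₀ hpos (by norm_num)]
        have : 2 / ε * ε ≤ (k:ℝ) * ε * ε := by nlinarith [hkε, hε0]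
        rw [div_mul_cancel₀ _ (ne_of_gt hε0)] at this
        nlinarith
      calc (1 - ε) ^ k ≤ 1 / (1 + ε) ^ k := by rw [← hpk2]; exact hpk1
        _ ≤ 1 / (1 + (k:ℝ) * ε) := hpk3
        _ ≤ ε / 2 := hpk4
    have hsum2 : (k : ℝ) * (8 / (ε * Δ)) ≤ ε / 2 := by
      have h1 : (k : ℝ) * (8 / (ε * Δ)) = 8 * k / (ε * Δ) := by ring
      rw [h1, div_le_div_iff₀ (by positivity) (by norm_num)]
      -- 8k*2 ≤ ε * (ε * Δ), i.e. 16 k ≤ ε² Δ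
      nlinarith [hk3', key4, pow_pos hε0 2, sq_nonneg ε, mul_pos hε0 hΔ0]
    calc ∑ S ∈ Ω.powerset, (if ¬ E S then μ S else 0)
        ≤ (1 - ε) ^ k + (k : ℝ) * (8 / (ε * Δ)) := by
          rw [← hterm1]; exact hsum.trans (by linarith [hterm2])
      _ ≤ ε / 2 + ε / 2 := add_le_add hpk hsum2
      _ = ε := by ring
  linarith
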